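/- A Metzler matrix A ∈ ℝ^{n×n} is Hurwitz if and only if there exists a diagonal matrix P with positive diagonal entries such that P·A + Aᵀ·P is negative definite. -/

import Mathlib

open Matrix Filter Topology
open scoped ENNReal

/-- `A` is Hurwitz: every complex eigenvalue has negative real part. -/
def IsHurwitz {n : Type*} [Fintype n] [DecidableEq n] (A : Matrix n n ℝ) : Prop :=
  ∀ μ ∈ spectrum ℂ (A.map (algebraMap ℝ ℂ)), μ.re < 0

namespace MetzlerAux

attribute [local instance] Matrix.linftyOpNormedRing Matrix.linftyOpNormedAlgebra

variable {n : ℕ}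

lemma mem_spectrum_iff_det {M : Matrix (Fin n) (Fin n) ℂ} {μ : ℂ} :
    μ ∈ spectrum ℂ M ↔ (μ • (1 : Matrix (Fin n) (Fin n) ℂ) - M).det = 0 := by
  rw [spectrum.mem_iff, Algebra.algebraMap_eq_smul_one, Matrix.isUnit_iff_isUnit_det,
    isUnit_iff_ne_zero, not_not]

lemma det_ne_zero_of_hurwitz {A : Matrix (Fin n) (Fin n) ℝ} (hH : IsHurwitz A) : A.det ≠ 0 := by
  intro h0
  have hd : (A.map (algebraMap ℝ ℂ)).det = 0 := by
    rw [show A.map (algebraMap ℝ ℂ) = (algebraMap ℝ ℂ).mapMatrix A from rfl,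
      ← RingHom.map_det, h0, map_zero]
  have h1 : (0 : ℂ) ∈ spectrum ℂ (A.map (algebraMap ℝ ℂ)) := by
    rw [mem_spectrum_iff_det, zero_smul, zero_sub, Matrix.det_neg, hd, mul_zero]
  simpa using hH 0 h1

lemma entry_nnnorm_le (M : Matrix (Fin n) (Fin n) ℂ) (i j : Fin n) : ‖M i j‖₊ ≤ ‖M‖₊ := by
  rw [Matrix.linfty_opNNNorm_def]
  exact le_trans (Finset.single_le_sum (f := fun j' => ‖M i j'‖₊) (fun _ _ => zero_le)
    (Finset.mem_univ j)) (Finset.le_sup (f := fun i => ∑ j, ‖M i j‖₊) (Finset.mem_univ i))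

/-- The key lemma: a Metzler Hurwitz matrix admits a strictly positive vector with
`A *ᵥ x` strictly negative. -/
lemma exists_pos_mulVec_neg {A : Matrix (Fin n) (Fin n) ℝ}
    (hMetzler : ∀ i j, i ≠ j → 0 ≤ A i j) (hH : IsHurwitz A) :
    ∃ x : Fin n → ℝ, (∀ i, 0 < x i) ∧ ∀ i, (A *ᵥ x) i < 0 := by
  classical
  set Ac := A.map (algebraMap ℝ ℂ) with hAc
  set F : Finset ℂ := (Matrix.finite_spectrum Ac).toFinset with hF
  set g : ℂ → ℝ := fun lam => Complex.normSq lam / (2 * (-lam.re)) with hg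
  set s : ℝ := 1 + (∑ i, |A i i|) + ∑ lam ∈ F, max (g lam) 0 with hs
  have hsum1 : (0:ℝ) ≤ ∑ i, |A i i| := Finset.sum_nonneg fun i _ => abs_nonneg _
  have hsum2 : (0:ℝ) ≤ ∑ lam ∈ F, max (g lam) 0 :=
    Finset.sum_nonneg fun lam _ => le_max_right _ _
  have hs1 : (1:ℝ) ≤ s := by simp only [hs]; linarith
  have hspos : (0:ℝ) < s := by linarith
  have hsne : s ≠ 0 := hspos.ne'
  have hsA : ∀ i, 0 ≤ A i i + s := by
    intro i
    have h1 : |A i i| ≤ ∑ k, |A k k| :=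
      Finset.single_le_sum (f := fun k => |A k k|) (fun k _ => abs_nonneg _) (Finset.mem_univ i)
    have := neg_abs_le (A i i)
    simp only [hs]; linarith
  have hsg : ∀ lam ∈ spectrum ℂ Ac, Complex.normSq lam < 2 * s * (-lam.re) := by
    intro lam hlam
    have hre : lam.re < 0 := hH lam hlam
    have hmem : lam ∈ F := (Matrix.finite_spectrum Ac).mem_toFinset.mpr hlam
    have h1 : g lam ≤ ∑ l ∈ F, max (g l) 0 :=
      le_trans (le_max_left _ _)
        (Finset.single_le_sum (f := fun l => max (g l) 0) (fun l _ => le_max_right _ _) hmem)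
    have h2 : g lam < s := by simp only [hs]; linarith
    have hpos : 0 < 2 * (-lam.re) := by linarith
    have hgm : g lam * (2 * (-lam.re)) = Complex.normSq lam := div_mul_cancel₀ _ hpos.ne'
    calc Complex.normSq lam = g lam * (2 * (-lam.re)) := hgm.symm
      _ < s * (2 * (-lam.re)) := mul_lt_mul_of_pos_right h2 hpos
      _ = 2 * s * (-lam.re) := by ring
  set C : Matrix (Fin n) (Fin n) ℝ := s⁻¹ • (A + s • (1 : Matrix (Fin n) (Fin n) ℝ)) with hC
  have hCnn : ∀ i j, 0 ≤ C i j := by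
    intro i j
    have h1 : (0:ℝ) ≤ s⁻¹ := by positivity
    rcases eq_or_ne i j with rfl | hij
    · have h2 : C i i = s⁻¹ * (A i i + s) := by simp [hC]; ring
      rw [h2]; exact mul_nonneg h1 (hsA i)
    · have h2 : C i j = s⁻¹ * A i j := by simp [hC, Matrix.one_apply_ne hij]
      rw [h2]; exact mul_nonneg h1 (hMetzler i j hij)
  have hA_eq : A = s • C - s • (1 : Matrix (Fin n) (Fin n) ℝ) := by
    simp only [hC, smul_smul, mul_inv_cancel₀ hsne, one_smul]
    abel
  set N : Matrix (Fin n) (Fin n) ℂ := C.map (algebraMap ℝ ℂ) with hN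
  -- spectral bound for N
  have hspec : ∀ μ ∈ spectrum ℂ N, ‖μ‖₊ < 1 := by
    intro μ hμ
    have hdet0 : (μ • (1 : Matrix (Fin n) (Fin n) ℂ) - N).det = 0 := mem_spectrum_iff_det.mp hμ
    have heq : μ • (1 : Matrix (Fin n) (Fin n) ℂ) - N
        = (s : ℂ)⁻¹ • ((s * μ - s) • (1 : Matrix (Fin n) (Fin n) ℂ) - Ac) := by
      ext i j
      simp only [Matrix.sub_apply, Matrix.smul_apply, Matrix.one_apply, Matrix.map_apply,
        hN, hC, hAc, Matrix.add_apply, smul_eq_mul, Matrix.smul_apply]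
      have hsc : (s:ℂ) ≠ 0 := by exact_mod_cast hsne
      split_ifs <;> push_cast <;> (field_simp; ring_nf; simp [hsc])
    have hlam : (s * μ - s) ∈ spectrum ℂ Ac := by
      rw [mem_spectrum_iff_det]
      rw [heq, Matrix.det_smul, Fintype.card_fin] at hdet0
      have hsc : ((s : ℂ)⁻¹) ^ n ≠ 0 := by
        apply pow_ne_zero; simpa using hsne
      exact (mul_eq_zero.mp hdet0).resolve_left hsc
    have hkey := hsg _ hlam
    have hrecomp : (s * μ - s).re = s * μ.re - s := by simp [Complex.sub_re, Complex.mul_re]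
    have himcomp : (s * μ - s).im = s * μ.im := by simp [Complex.sub_im, Complex.mul_im]
    rw [Complex.normSq_apply, hrecomp, himcomp] at hkey
    have habs : ‖μ‖ < 1 := by
      have h1 : Complex.normSq μ < 1 := by
        rw [Complex.normSq_apply]
        nlinarith [hkey, mul_pos hspos hspos]
      rw [← Complex.sq_norm] at h1
      nlinarith [norm_nonneg μ]
    rw [← NNReal.coe_lt_coe]
    rw [coe_nnnorm, NNReal.coe_one]; exact habs
  -- Gelfand's formula: powers of `C` tend to zero entrywise
  haveI : CompleteSpace (Matrix (Fin n) (Fin n) ℂ) := FiniteDimensional.complete ℂ _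
  set FN : Finset ℂ := (Matrix.finite_spectrum N).toFinset with hFN
  set c : NNReal := FN.sup (fun μ => ‖μ‖₊) with hc
  have hc1 : c < 1 := by
    rw [hc]
    refine (Finset.sup_lt_iff zero_lt_one).mpr fun μ hμ => ?_
    exact hspec μ ((Matrix.finite_spectrum N).mem_toFinset.mp hμ)
  have hrho : spectralRadius ℂ N ≤ (c : ℝ≥0∞) := by
    rw [spectralRadius]
    refine iSup₂_le fun μ hμ => ?_
    exact_mod_cast Finset.le_sup (f := fun μ : ℂ => ‖μ‖₊)
      ((Matrix.finite_spectrum N).mem_toFinset.mpr hμ)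
  set r : NNReal := (c + 1) / 2 with hr
  have hcr : c < r := by
    rw [hr, ← NNReal.coe_lt_coe]
    rw [NNReal.coe_div, NNReal.coe_add]
    push_cast
    have := hc1
    rw [← NNReal.coe_lt_coe] at this
    push_cast at this
    linarith
  have hr1 : (r : ℝ) < 1 := by
    rw [hr]
    push_cast
    have := hc1
    rw [← NNReal.coe_lt_coe] at this
    push_cast at this
    linarith
  have hgelf := spectrum.pow_nnnorm_pow_one_div_tendsto_nhds_spectralRadius N
  have hev : ∀ᶠ m : ℕ in atTop, (‖N ^ m‖₊ : ℝ≥0∞) ^ (1/(m:ℝ)) < (r : ℝ≥0∞) :=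
    hgelf.eventually_lt_const (lt_of_le_of_lt hrho (by exact_mod_cast hcr))
  have hpowN : ∀ m : ℕ, N ^ m = (C ^ m).map (algebraMap ℝ ℂ) := by
    intro m
    rw [hN, show ∀ M : Matrix (Fin n) (Fin n) ℝ,
      M.map (algebraMap ℝ ℂ) = (algebraMap ℝ ℂ).mapMatrix M from fun _ => rfl, ← map_pow,
      RingHom.mapMatrix_apply]
  have hevpow : ∀ᶠ m : ℕ in atTop, ∀ i j, |(C ^ m) i j| ≤ (r : ℝ) ^ m := by
    filter_upwards [hev, eventually_ge_atTop 1] with m hm hm1 i j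
    have hm0 : (m : ℝ) ≠ 0 := by exact_mod_cast (Nat.one_le_iff_ne_zero.mp hm1)
    have h2 := ENNReal.rpow_lt_rpow hm (by positivity : (0:ℝ) < (m:ℝ))
    rw [← ENNReal.rpow_mul, one_div, inv_mul_cancel₀ hm0, ENNReal.rpow_one,
      ENNReal.rpow_natCast, ← ENNReal.coe_pow, ENNReal.coe_lt_coe] at h2
    have h3 : ‖N ^ m‖ ≤ (r : ℝ) ^ m := by
      have := h2.le
      rw [← NNReal.coe_le_coe] at this
      simpa [coe_nnnorm] using this
    have h4 : |(C ^ m) i j| = ‖(N ^ m) i j‖ := by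
      rw [hpowN m, Matrix.map_apply]
      simp [Complex.norm_real]
    rw [h4]
    calc ‖(N ^ m) i j‖ ≤ ‖N ^ m‖ := by
          have := entry_nnnorm_le (N ^ m) i j
          rw [← NNReal.coe_le_coe] at this
          simpa [coe_nnnorm] using this
      _ ≤ (r : ℝ) ^ m := h3
  have hCm0 : ∀ i j, Tendsto (fun m => (C ^ m) i j) atTop (𝓝 0) := by
    intro i j
    rw [tendsto_zero_iff_abs_tendsto_zero]
    exact squeeze_zero' (Eventually.of_forall fun m => abs_nonneg _)
      (hevpow.mono fun m hm => hm i j)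
      (tendsto_pow_atTop_nhds_zero_of_lt_one r.coe_nonneg hr1)
  -- inverse of `1 - C` and its nonnegativity
  have hCsub : s⁻¹ • A = C - 1 := by
    rw [hA_eq]
    ext i j
    simp only [Matrix.smul_apply, Matrix.sub_apply, smul_eq_mul]
    field_simp
  have h1C : (1 : Matrix (Fin n) (Fin n) ℝ) - C = -(s⁻¹ • A) := by rw [hCsub, neg_sub]
  have hdetA : IsUnit ((1 : Matrix (Fin n) (Fin n) ℝ) - C).det := by
    rw [h1C, Matrix.det_neg, Matrix.det_smul, isUnit_iff_ne_zero]
    have hA0 := det_ne_zero_of_hurwitz hH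
    have h1 : ((-1:ℝ)) ^ Fintype.card (Fin n) ≠ 0 := pow_ne_zero _ (by norm_num)
    have h2 : (s⁻¹) ^ Fintype.card (Fin n) ≠ 0 := pow_ne_zero _ (inv_ne_zero hsne)
    exact mul_ne_zero h1 (mul_ne_zero h2 hA0)
  set E : Matrix (Fin n) (Fin n) ℝ := ((1 : Matrix (Fin n) (Fin n) ℝ) - C)⁻¹ with hE
  have hEl : ((1 : Matrix (Fin n) (Fin n) ℝ) - C) * E = 1 := Matrix.mul_nonsing_inv _ hdetA
  have hEr : E * ((1 : Matrix (Fin n) (Fin n) ℝ) - C) = 1 := Matrix.nonsing_inv_mul _ hdetA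
  have hgeom : ∀ m, (∑ k ∈ Finset.range m, C ^ k) = E - E * C ^ m := by
    intro m
    have h1 : ((1:Matrix (Fin n) (Fin n) ℝ) - C) * ∑ k ∈ Finset.range m, C ^ k = 1 - C ^ m := by
      calc ((1:Matrix (Fin n) (Fin n) ℝ) - C) * ∑ k ∈ Finset.range m, C ^ k
          = -((C - 1) * ∑ k ∈ Finset.range m, C ^ k) := by rw [← neg_mul, neg_sub]
        _ = -(C ^ m - 1) := by rw [mul_geom_sum]
        _ = 1 - C ^ m := neg_sub _ _
    calc (∑ k ∈ Finset.range m, C ^ k)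
        = (E * ((1:Matrix (Fin n) (Fin n) ℝ) - C)) * ∑ k ∈ Finset.range m, C ^ k := by
          rw [hEr, one_mul]
      _ = E * (((1:Matrix (Fin n) (Fin n) ℝ) - C) * ∑ k ∈ Finset.range m, C ^ k) :=
          mul_assoc _ _ _
      _ = E * (1 - C ^ m) := by rw [h1]
      _ = E - E * C ^ m := by rw [mul_sub, mul_one]
  have hCknn : ∀ (k : ℕ) (i j : Fin n), 0 ≤ (C ^ k) i j := by
    intro k
    induction k with
    | zero =>
      intro i j
      rw [pow_zero]
      rcases eq_or_ne i j with rfl | hij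
      · simp
      · simp [Matrix.one_apply_ne hij]
    | succ k ih =>
      intro i j
      rw [pow_succ, Matrix.mul_apply]
      exact Finset.sum_nonneg fun l _ => mul_nonneg (ih _ _) (hCnn _ _)
  have hEtend : ∀ i j, Tendsto (fun m => (∑ k ∈ Finset.range m, C ^ k) i j) atTop (𝓝 (E i j)) := by
    intro i j
    simp only [hgeom, Matrix.sub_apply]
    have h2 : Tendsto (fun m => (E * C ^ m) i j) atTop (𝓝 0) := by
      simp only [Matrix.mul_apply]
      have := tendsto_finset_sum (Finset.univ) (fun l (_ : l ∈ Finset.univ) =>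
        ((hCm0 l j).const_mul (E i l)))
      simpa using this
    simpa using Tendsto.const_sub (E i j) h2
  have hE1 : ∀ i j, (1 : Matrix (Fin n) (Fin n) ℝ) i j ≤ E i j := by
    intro i j
    refine ge_of_tendsto (hEtend i j) ?_
    filter_upwards [eventually_ge_atTop 1] with m hm
    rw [Matrix.sum_apply]
    calc (1 : Matrix (Fin n) (Fin n) ℝ) i j = (C ^ 0) i j := by rw [pow_zero]
      _ ≤ ∑ k ∈ Finset.range m, (C ^ k) i j :=
          Finset.single_le_sum (f := fun k => (C ^ k) i j) (fun k _ => hCknn k i j)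
            (Finset.mem_range.mpr hm)
  have hEnn : ∀ i j, 0 ≤ E i j := by
    intro i j
    refine le_trans ?_ (hE1 i j)
    rcases eq_or_ne i j with rfl | hij
    · simp
    · simp [Matrix.one_apply_ne hij]
  refine ⟨E *ᵥ (fun _ => 1), ?_, ?_⟩
  · intro i
    have h1 : (E *ᵥ (fun _ => 1)) i = ∑ j, E i j := by
      simp [Matrix.mulVec, dotProduct]
    rw [h1]
    calc (0:ℝ) < 1 := one_pos
      _ = (1 : Matrix (Fin n) (Fin n) ℝ) i i := by simp
      _ ≤ E i i := hE1 i i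
      _ ≤ ∑ j, E i j :=
          Finset.single_le_sum (f := fun j => E i j) (fun j _ => hEnn i j) (Finset.mem_univ i)
  · intro i
    have hAmat : A = (-s) • ((1 : Matrix (Fin n) (Fin n) ℝ) - C) := by
      have h1 : (-s) • ((1 : Matrix (Fin n) (Fin n) ℝ) - C) = s • C - s • 1 := by
        rw [smul_sub, neg_smul, neg_smul, sub_neg_eq_add]
        abel
      rw [hA_eq, ← h1]
    have h2 : A *ᵥ (E *ᵥ (fun _ => 1)) = (-s) • (fun _ => (1:ℝ)) := by
      rw [Matrix.mulVec_mulVec, hAmat, smul_mul_assoc, hEl, Matrix.smul_mulVec,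
        Matrix.one_mulVec]
    rw [h2]
    simp [hspos]


lemma posdef_of_metzler_symm {S : Matrix (Fin n) (Fin n) ℝ} (hsymm : Sᵀ = S)
    (hoff : ∀ i j, i ≠ j → 0 ≤ S i j) {x : Fin n → ℝ} (hx : ∀ i, 0 < x i)
    (hSx : ∀ i, (S *ᵥ x) i < 0) : (-S).PosDef := by
  have hsym' : ∀ a b, S a b = S b a := by
    intro a b
    rw [← congrFun (congrFun hsymm a) b, Matrix.transpose_apply]
  refine Matrix.PosDef.of_dotProduct_mulVec_pos ?_ ?_
  · show (-S)ᴴ = -S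
    ext i j
    simp only [Matrix.conjTranspose_apply, Matrix.neg_apply, star_trivial, neg_inj]
    exact (hsym' i j).symm
  · intro v hv
    have heq : star v ⬝ᵥ (-S) *ᵥ v = -(v ⬝ᵥ S *ᵥ v) := by
      simp [Matrix.neg_mulVec, star_trivial]
    rw [heq]
    have key : ∀ i j, 2 * (v i * (S i j * v j))
        ≤ S i j * (v i ^ 2 * (x j / x i)) + S i j * (v j ^ 2 * (x i / x j)) := by
      intro i j
      rcases eq_or_ne i j with rfl | hij
      · refine le_of_eq ?_
        rw [div_self (hx i).ne']
        ring
      · have hS := hoff i j hij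
        have hamg : 2 * (v i * v j) ≤ v i ^ 2 * (x j / x i) + v j ^ 2 * (x i / x j) := by
          have ha2 : (v i * Real.sqrt (x j / x i)) ^ 2 = v i ^ 2 * (x j / x i) := by
            rw [mul_pow, Real.sq_sqrt (div_nonneg (hx j).le (hx i).le)]
          have hb2 : (v j * Real.sqrt (x i / x j)) ^ 2 = v j ^ 2 * (x i / x j) := by
            rw [mul_pow, Real.sq_sqrt (div_nonneg (hx i).le (hx j).le)]
          have h1 : Real.sqrt (x j / x i) * Real.sqrt (x i / x j) = 1 := by
            rw [← Real.sqrt_mul (div_nonneg (hx j).le (hx i).le),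
              show x j / x i * (x i / x j) = 1 by
                rw [div_mul_div_comm, mul_comm (x j) (x i),
                  div_self (mul_pos (hx i) (hx j)).ne'],
              Real.sqrt_one]
          calc 2 * (v i * v j)
              = 2 * (v i * Real.sqrt (x j / x i)) * (v j * Real.sqrt (x i / x j)) := by
                rw [show 2 * (v i * Real.sqrt (x j / x i)) * (v j * Real.sqrt (x i / x j))
                  = 2 * (v i * v j) * (Real.sqrt (x j / x i) * Real.sqrt (x i / x j)) by ring,
                  h1, mul_one]
            _ ≤ (v i * Real.sqrt (x j / x i)) ^ 2 + (v j * Real.sqrt (x i / x j)) ^ 2 :=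
                two_mul_le_add_sq _ _
            _ = v i ^ 2 * (x j / x i) + v j ^ 2 * (x i / x j) := by rw [ha2, hb2]
        calc 2 * (v i * (S i j * v j)) = S i j * (2 * (v i * v j)) := by ring
          _ ≤ S i j * (v i ^ 2 * (x j / x i) + v j ^ 2 * (x i / x j)) :=
              mul_le_mul_of_nonneg_left hamg hS
          _ = S i j * (v i ^ 2 * (x j / x i)) + S i j * (v j ^ 2 * (x i / x j)) := by ring
    have e1 : v ⬝ᵥ S *ᵥ v = ∑ i, ∑ j, v i * (S i j * v j) := by
      simp only [dotProduct, Matrix.mulVec, Finset.mul_sum]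
    have h2q : 2 * (v ⬝ᵥ S *ᵥ v) = ∑ i, ∑ j, 2 * (v i * (S i j * v j)) := by
      rw [e1, Finset.mul_sum]
      exact Finset.sum_congr rfl fun i _ => Finset.mul_sum _ _ _
    have hstep : ∑ i, ∑ j, 2 * (v i * (S i j * v j))
        ≤ ∑ i, ∑ j, (S i j * (v i ^ 2 * (x j / x i)) + S i j * (v j ^ 2 * (x i / x j))) :=
      Finset.sum_le_sum fun i _ => Finset.sum_le_sum fun j _ => key i j
    have hsplit : ∑ i, ∑ j, (S i j * (v i ^ 2 * (x j / x i)) + S i j * (v j ^ 2 * (x i / x j)))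
        = (∑ i, ∑ j, S i j * (v i ^ 2 * (x j / x i)))
          + ∑ i, ∑ j, S i j * (v j ^ 2 * (x i / x j)) := by
      rw [← Finset.sum_add_distrib]
      exact Finset.sum_congr rfl fun i _ => by rw [← Finset.sum_add_distrib]
    have hswap : ∑ i, ∑ j, S i j * (v j ^ 2 * (x i / x j))
        = ∑ i, ∑ j, S i j * (v i ^ 2 * (x j / x i)) := by
      rw [Finset.sum_comm]
      exact Finset.sum_congr rfl fun i _ => Finset.sum_congr rfl fun j _ => by rw [hsym' j i]
    have hfinal : ∑ i, ∑ j, S i j * (v i ^ 2 * (x j / x i))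
        = ∑ i, (v i ^ 2 / x i) * (S *ᵥ x) i := by
      refine Finset.sum_congr rfl fun i _ => ?_
      simp only [Matrix.mulVec, dotProduct, Finset.mul_sum]
      exact Finset.sum_congr rfl fun j _ => by
        field_simp
    have hneg : ∑ i, (v i ^ 2 / x i) * (S *ᵥ x) i < 0 := by
      obtain ⟨i0, hi0⟩ : ∃ i, v i ≠ 0 := by
        by_contra h; push_neg at h; exact hv (funext fun i => h i)
      calc ∑ i, (v i ^ 2 / x i) * (S *ᵥ x) i
          < ∑ _i : Fin n, (0:ℝ) :=
            Finset.sum_lt_sum (fun i _ => mul_nonpos_of_nonneg_of_nonpos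
                (div_nonneg (sq_nonneg _) (hx i).le) (hSx i).le)
              ⟨i0, Finset.mem_univ i0, mul_neg_of_pos_of_neg
                (div_pos (pow_two_pos_of_ne_zero hi0) (hx i0)) (hSx i0)⟩
        _ = 0 := by simp
    linarith
lemma mem_spectrum_iff_eigen {M : Matrix (Fin n) (Fin n) ℂ} {μ : ℂ} :
    μ ∈ spectrum ℂ M ↔ ∃ v, v ≠ 0 ∧ M *ᵥ v = μ • v := by
  rw [mem_spectrum_iff_det, ← Matrix.exists_mulVec_eq_zero_iff]
  constructor
  · rintro ⟨v, hv, h⟩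
    rw [Matrix.sub_mulVec, Matrix.smul_mulVec, Matrix.one_mulVec, sub_eq_zero] at h
    exact ⟨v, hv, h.symm⟩
  · rintro ⟨v, hv, h⟩
    refine ⟨v, hv, ?_⟩
    rw [Matrix.sub_mulVec, Matrix.smul_mulVec, Matrix.one_mulVec, sub_eq_zero, h]

lemma hurwitz_transpose {A : Matrix (Fin n) (Fin n) ℝ} (hH : IsHurwitz A) : IsHurwitz Aᵀ := by
  intro μ hμ
  apply hH μ
  rw [mem_spectrum_iff_det] at hμ ⊢
  rw [Matrix.transpose_map] at hμ
  rw [← Matrix.det_transpose]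
  simpa [Matrix.transpose_sub, Matrix.transpose_smul] using hμ

lemma hurwitz_of_lyapunov {A : Matrix (Fin n) (Fin n) ℝ} (p : Fin n → ℝ) (hp : ∀ i, 0 < p i)
    (hPD : (-(Matrix.diagonal p * A + Aᵀ * Matrix.diagonal p)).PosDef) : IsHurwitz A := by
  intro μ hμ
  obtain ⟨v, hv, hvEq⟩ := mem_spectrum_iff_eigen.mp hμ
  set S := Matrix.diagonal p * A + Aᵀ * Matrix.diagonal p with hS
  set x : Fin n → ℝ := fun i => (v i).re with hx
  set y : Fin n → ℝ := fun i => (v i).im with hy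
  have heig : ∀ i, (∑ j, (A i j : ℂ) * v j) = μ * v i := by
    intro i
    have h := congrFun hvEq i
    simpa [Matrix.mulVec, dotProduct, Matrix.map_apply] using h
  have hre : ∀ i, (∑ j, A i j * x j) = μ.re * x i - μ.im * y i := by
    intro i
    have := congrArg Complex.re (heig i)
    simpa [Complex.re_sum, Complex.mul_re, hx, hy] using this
  have him : ∀ i, (∑ j, A i j * y j) = μ.re * y i + μ.im * x i := by
    intro i
    have := congrArg Complex.im (heig i)
    simpa [Complex.im_sum, Complex.mul_im, hx, hy] using this
  have hq_eq : ∀ u : Fin n → ℝ, u ⬝ᵥ S *ᵥ u = 2 * ∑ i, p i * u i * ∑ j, A i j * u j := by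
    intro u
    simp only [hS, dotProduct, Matrix.mulVec, Matrix.add_apply, Matrix.diagonal_mul,
      Matrix.mul_diagonal, Matrix.transpose_apply, Finset.mul_sum]
    calc ∑ i, ∑ j, u i * ((p i * A i j + A j i * p j) * u j)
        = (∑ i, ∑ j, p i * u i * (A i j * u j)) + ∑ i, ∑ j, A j i * p j * (u i * u j) := by
          rw [← Finset.sum_add_distrib]
          refine Finset.sum_congr rfl fun i _ => ?_
          rw [← Finset.sum_add_distrib]
          exact Finset.sum_congr rfl fun j _ => by ring
      _ = (∑ i, ∑ j, p i * u i * (A i j * u j)) + ∑ i, ∑ j, A i j * p i * (u j * u i) := by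
          congr 1
          exact Finset.sum_comm
      _ = ∑ i, ∑ j, 2 * (p i * u i * (A i j * u j)) := by
          rw [← Finset.sum_add_distrib]
          refine Finset.sum_congr rfl fun i _ => ?_
          rw [← Finset.sum_add_distrib]
          exact Finset.sum_congr rfl fun j _ => by ring
  have hsum : x ⬝ᵥ S *ᵥ x + y ⬝ᵥ S *ᵥ y = 2 * μ.re * ∑ i, p i * (x i ^ 2 + y i ^ 2) := by
    rw [hq_eq x, hq_eq y]
    simp only [hre, him]
    rw [Finset.mul_sum, Finset.mul_sum, Finset.mul_sum, ← Finset.sum_add_distrib]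
    exact Finset.sum_congr rfl fun i _ => by ring
  obtain ⟨i0, hi0⟩ : ∃ i, v i ≠ 0 := by
    by_contra h; push_neg at h; exact hv (funext fun i => h i)
  have hr : 0 < ∑ i, p i * (x i ^ 2 + y i ^ 2) := by
    apply Finset.sum_pos' (fun i _ => mul_nonneg (hp i).le (by positivity))
    refine ⟨i0, Finset.mem_univ _, ?_⟩
    have h1 : 0 < x i0 ^ 2 + y i0 ^ 2 := by
      have := Complex.normSq_pos.mpr hi0
      rw [Complex.normSq_apply] at this
      simpa [hx, hy, sq] using this
    exact mul_pos (hp i0) h1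
  have hqneg : ∀ u : Fin n → ℝ, u ≠ 0 → u ⬝ᵥ S *ᵥ u < 0 := by
    intro u hu
    have h := hPD.dotProduct_mulVec_pos hu
    have heq : star u ⬝ᵥ (-S) *ᵥ u = -(u ⬝ᵥ S *ᵥ u) := by
      simp [Matrix.neg_mulVec, star_trivial]
    rw [heq] at h
    linarith
  have hqle : ∀ u : Fin n → ℝ, u ⬝ᵥ S *ᵥ u ≤ 0 := by
    intro u
    by_cases hu : u = 0
    · simp [hu]
    · exact (hqneg u hu).le
  have hxy : x ≠ 0 ∨ y ≠ 0 := by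
    by_contra h
    push_neg at h
    apply hi0
    have h1 := congrFun h.1 i0
    have h2 := congrFun h.2 i0
    exact Complex.ext (by simpa [hx] using h1) (by simpa [hy] using h2)
  have hneg : x ⬝ᵥ S *ᵥ x + y ⬝ᵥ S *ᵥ y < 0 := by
    rcases hxy with h | h
    · have := hqneg x h; have := hqle y; linarith
    · have := hqneg y h; have := hqle x; linarith
  rw [hsum] at hneg
  nlinarith [hr, hneg]

end MetzlerAux


theorem metzler_hurwitz_iff_diagonal_lyapunov {n : ℕ} (A : Matrix (Fin n) (Fin n) ℝ)
    (hMetzler : ∀ i j, i ≠ j → 0 ≤ A i j) :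
    IsHurwitz A ↔
      ∃ p : Fin n → ℝ, (∀ i, 0 < p i) ∧
        (-(Matrix.diagonal p * A + Aᵀ * Matrix.diagonal p)).PosDef := by
  constructor
  · intro hH
    obtain ⟨x, hx, hAx⟩ := MetzlerAux.exists_pos_mulVec_neg hMetzler hH
    have hMT : ∀ i j, i ≠ j → 0 ≤ Aᵀ i j := fun i j hij => hMetzler j i (Ne.symm hij)
    obtain ⟨z, hz, hAz⟩ :=
      MetzlerAux.exists_pos_mulVec_neg hMT (MetzlerAux.hurwitz_transpose hH)
    set p : Fin n → ℝ := fun i => z i / x i with hpdef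
    refine ⟨p, fun i => div_pos (hz i) (hx i), ?_⟩
    refine MetzlerAux.posdef_of_metzler_symm (x := x) ?hsymm ?hoff hx ?hSx
    case hsymm =>
      rw [Matrix.transpose_add, Matrix.transpose_mul, Matrix.transpose_mul,
        Matrix.diagonal_transpose, Matrix.transpose_transpose, add_comm]
    case hoff =>
      intro i j hij
      rw [Matrix.add_apply, Matrix.diagonal_mul, Matrix.mul_diagonal, Matrix.transpose_apply]
      have h1 : 0 ≤ p i := (div_pos (hz i) (hx i)).le
      have h2 : 0 ≤ p j := (div_pos (hz j) (hx j)).le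
      exact add_nonneg (mul_nonneg h1 (hMetzler i j hij)) (mul_nonneg (hMetzler j i hij.symm) h2)
    case hSx =>
      intro i
      have hDz : Matrix.diagonal p *ᵥ x = z := by
        funext k
        rw [Matrix.mulVec_diagonal]
        exact div_mul_cancel₀ (z k) (hx k).ne'
      have h1 : ((Matrix.diagonal p * A + Aᵀ * Matrix.diagonal p) *ᵥ x) i
          = p i * (A *ᵥ x) i + (Aᵀ *ᵥ z) i := by
        rw [Matrix.add_mulVec, Pi.add_apply, ← Matrix.mulVec_mulVec, ← Matrix.mulVec_mulVec,
          hDz, Matrix.mulVec_diagonal]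
      rw [h1]
      have h2 : p i * (A *ᵥ x) i < 0 := mul_neg_of_pos_of_neg (div_pos (hz i) (hx i)) (hAx i)
      have h3 : (Aᵀ *ᵥ z) i < 0 := hAz i
      linarith
  · rintro ⟨p, hp, hPD⟩
    exact MetzlerAux.hurwitz_of_lyapunov p hp hPD
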